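/- Let G = (V,E) be a finite connected simple graph and let w₁, w₂ : E → ℝ be injective edge-weight functions with w₁(e) ≤ w₂(e) for all e ∈ E. Let E⁺ = { e ∈ E : w₂(e) > w₁(e) }. If T₁ is a minimum-weight spanning tree of G with respect to w₁ and T₂ is a minimum-weight spanning tree of G with respect to w₂, then T₁ \ E⁺ ⊆ T₂. -/

import Mathlib

/-- The edge set `S` is acyclic: the graph `(V, S)` contains no cycle. -/
def EdgesAcyclic {V : Type*} (S : Finset (Sym2 V)) : Prop :=
  (SimpleGraph.fromEdgeSet (S : Set (Sym2 V))).IsAcyclic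

/-- The edge set `S` spans a connected graph `(V, S)` on the whole vertex set. -/
def EdgesConnected {V : Type*} (S : Finset (Sym2 V)) : Prop :=
  (SimpleGraph.fromEdgeSet (S : Set (Sym2 V))).Connected

/-- `T` is a spanning tree of `G`: a subset of the edges of `G` such that the
subgraph `(V, T)` is connected and acyclic. -/
def IsSpanningTree {V : Type*} (G : SimpleGraph V) (T : Finset (Sym2 V)) : Prop :=
  (T : Set (Sym2 V)) ⊆ G.edgeSet ∧ EdgesConnected T ∧ EdgesAcyclic T

/-- The weight of an edge set: `w(S) = ∑_{e ∈ S} w(e)`. -/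
def wsum {V : Type*} (w : Sym2 V → ℝ) (S : Finset (Sym2 V)) : ℝ := ∑ e ∈ S, w e

/-- `T` is a minimum-weight spanning tree of `G` with respect to `w`. -/
def IsMST {V : Type*} (G : SimpleGraph V) (w : Sym2 V → ℝ) (T : Finset (Sym2 V)) : Prop :=
  IsSpanningTree G T ∧ ∀ T' : Finset (Sym2 V), IsSpanningTree G T' → wsum w T ≤ wsum w T'

open SimpleGraph

section Helpers

set_option linter.unusedSectionVars false
set_option linter.unusedVariables false

variable {V : Type*} [DecidableEq V]

private lemma del_eq (T : Finset (Sym2 V)) (g : Sym2 V) :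
    (fromEdgeSet (T : Set (Sym2 V))).deleteEdges {g} =
      fromEdgeSet ((T.erase g : Finset (Sym2 V)) : Set (Sym2 V)) := by
  ext u v
  simp only [deleteEdges_adj, fromEdgeSet_adj, Finset.coe_erase, Set.mem_diff,
    Set.mem_singleton_iff, Finset.mem_coe, Finset.mem_erase]
  tauto

private lemma reach_or {K : SimpleGraph V} {x v : V} (y : V) (w : K.Walk v x) :
    (K.deleteEdges {s(x, y)}).Reachable v x ∨ (K.deleteEdges {s(x, y)}).Reachable v y := by
  induction w with
  | nil => exact Or.inl (Reachable.refl _)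
  | @cons a m c h q ih =>
    by_cases he : s(a, m) = s(c, y)
    · rw [Sym2.eq_iff] at he
      rcases he with ⟨rfl, rfl⟩ | ⟨rfl, rfl⟩
      · exact Or.inl (Reachable.refl _)
      · exact Or.inr (Reachable.refl _)
    · have hadj : (K.deleteEdges {s(c, y)}).Adj a m := by
        rw [deleteEdges_adj]; exact ⟨h, by simpa using he⟩
      rcases ih with h1 | h1
      · exact Or.inl (hadj.reachable.trans h1)
      · exact Or.inr (hadj.reachable.trans h1)

private lemma dart_split {K : SimpleGraph V} {u v : V} (p : K.Walk u v) (d : K.Dart)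
    (hd : d ∈ p.darts) :
    ∃ (q₁ : K.Walk u d.fst) (q₂ : K.Walk d.snd v),
      p.edges = q₁.edges ++ d.edge :: q₂.edges := by
  induction p with
  | nil => simp at hd
  | @cons a m w h q ih =>
    rw [Walk.darts_cons, List.mem_cons] at hd
    rcases hd with rfl | hd
    · exact ⟨Walk.nil, q, by simp [Dart.edge]⟩
    · obtain ⟨q₁, q₂, hq⟩ := ih hd
      exact ⟨Walk.cons h q₁, q₂, by simp [hq]⟩

private lemma wsum_swap (w : Sym2 V → ℝ) {T : Finset (Sym2 V)} {g h : Sym2 V}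
    (hg : g ∈ T) (hh : h ∉ T) :
    wsum w (insert h (T.erase g)) = wsum w T - w g + w h := by
  rw [wsum, wsum, Finset.sum_insert (fun hc => hh (Finset.mem_of_mem_erase hc)),
    Finset.sum_erase_eq_sub hg]
  ring

private lemma swap_tree {T : Finset (Sym2 V)}
    (hc : EdgesConnected T) (ha : EdgesAcyclic T)
    {u₁ u₂ v₁ v₂ : V} (hu : u₁ ≠ u₂) (hv : v₁ ≠ v₂)
    (hg : s(u₁, u₂) ∈ T)
    (h1 : (fromEdgeSet ((T.erase s(u₁, u₂) : Finset (Sym2 V)) : Set (Sym2 V))).Reachable u₁ v₁)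
    (h2 : (fromEdgeSet ((T.erase s(u₁, u₂) : Finset (Sym2 V)) : Set (Sym2 V))).Reachable u₂ v₂) :
    EdgesConnected (insert s(v₁, v₂) (T.erase s(u₁, u₂))) ∧
      EdgesAcyclic (insert s(v₁, v₂) (T.erase s(u₁, u₂))) := by
  set g := s(u₁, u₂) with hgdef
  set h := s(v₁, v₂) with hhdef
  set D := fromEdgeSet ((T.erase g : Finset (Sym2 V)) : Set (Sym2 V)) with hD
  set K := fromEdgeSet ((insert h (T.erase g) : Finset (Sym2 V)) : Set (Sym2 V)) with hK
  have hDK : D ≤ K := fromEdgeSet_mono (by exact_mod_cast Finset.subset_insert _ _)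
  have hDT : D ≤ fromEdgeSet (T : Set (Sym2 V)) :=
    fromEdgeSet_mono (by exact_mod_cast Finset.erase_subset _ _)
  have hKadj : K.Adj v₁ v₂ := (fromEdgeSet_adj _).mpr ⟨by simp [hhdef], hv⟩
  have hTadj : (fromEdgeSet (T : Set (Sym2 V))).Adj u₁ u₂ := (fromEdgeSet_adj _).mpr ⟨hg, hu⟩
  have hbr : ¬ D.Reachable u₁ u₂ := by
    have hb := isAcyclic_iff_forall_adj_isBridge.mp ha hTadj
    rw [isBridge_iff] at hb
    rw [hD, ← del_eq]
    exact hb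
  have hdel : (fromEdgeSet (T : Set (Sym2 V))).deleteEdges {g} ≤ K := by
    rw [del_eq]; exact hDK
  constructor
  · -- connectivity
    have hreach : ∀ v, K.Reachable v v₁ := by
      intro v
      obtain ⟨wv⟩ := hc.preconnected v u₁
      rcases reach_or u₂ wv with hr | hr
      · exact (hr.mono hdel).trans (h1.mono hDK)
      · exact ((hr.mono hdel).trans (h2.mono hDK)).trans hKadj.symm.reachable
    haveI : Nonempty V := hc.nonempty
    exact Connected.mk (fun s t => (hreach s).trans (hreach t).symm)
  · -- acyclicity
    intro z c hcyc
    by_cases hhc : h ∈ c.edges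
    · have hcyc' : K.Adj v₁ v₂ ∧ (K \ fromEdgeSet {h}).Reachable v₁ v₂ :=
        adj_and_reachable_delete_edges_iff_exists_cycle.mpr ⟨z, c, hcyc, hhc⟩
      have hle : (K \ fromEdgeSet {h}) ≤ D := by
        intro p q hpq
        rw [sdiff_adj, fromEdgeSet_adj, fromEdgeSet_adj] at hpq
        obtain ⟨⟨hp1, hp2⟩, hp3⟩ := hpq
        rw [hD, fromEdgeSet_adj]
        refine ⟨?_, hp2⟩
        have : s(p, q) ≠ h := fun hq => hp3 (by rw [hq]; exact ⟨rfl, hp2⟩)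
        simpa [this] using hp1
      exact hbr (h1.trans ((hcyc'.2.mono hle).trans h2.symm))
    · have hsub : ∀ e ∈ c.edges, e ∈ (fromEdgeSet (T : Set (Sym2 V))).edgeSet := by
        intro e hec
        have he1 := c.edges_subset_edgeSet hec
        rw [edgeSet_fromEdgeSet] at he1
        rw [edgeSet_fromEdgeSet]
        refine ⟨?_, he1.2⟩
        have hne : e ≠ h := fun hq => hhc (hq ▸ hec)
        have h' := he1.1
        simp only [Finset.coe_insert, Set.mem_insert_iff, Finset.mem_coe] at h'
        rcases h' with h' | h'
        · exact absurd h' hne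
        · exact_mod_cast Finset.erase_subset _ _ h'
      exact ha _ (hcyc.transfer hsub)

end Helpers

/-- Let `w₁ ≤ w₂` be injective edge weights on a finite connected simple
graph, and `E⁺ = { e : w₂(e) > w₁(e) }`. If `T₁` is an MST for `w₁` and `T₂` an MST
for `w₂`, then `T₁ \ E⁺ ⊆ T₂`. -/
theorem stmt_6 {V : Type*} [Fintype V] [DecidableEq V] (G : SimpleGraph V)
    (hG : G.Connected) (w₁ w₂ : Sym2 V → ℝ)
    (hw₁ : Set.InjOn w₁ G.edgeSet) (hw₂ : Set.InjOn w₂ G.edgeSet)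
    (hle : ∀ e ∈ G.edgeSet, w₁ e ≤ w₂ e)
    (Eplus : Finset (Sym2 V)) (hEp : ∀ e, e ∈ Eplus ↔ e ∈ G.edgeSet ∧ w₁ e < w₂ e)
    (T₁ T₂ : Finset (Sym2 V)) (hT₁ : IsMST G w₁ T₁) (hT₂ : IsMST G w₂ T₂) :
    T₁ \ Eplus ⊆ T₂ := by
  intro e he
  induction e using Sym2.ind with
  | _ a b =>
  by_contra heT₂
  rw [Finset.mem_sdiff] at he
  obtain ⟨heT₁, heE⟩ := he
  obtain ⟨⟨hT₁G, hT₁c, hT₁a⟩, hT₁min⟩ := hT₁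
  obtain ⟨⟨hT₂G, hT₂c, hT₂a⟩, hT₂min⟩ := hT₂
  have heG : s(a, b) ∈ G.edgeSet := hT₁G heT₁
  have hab : a ≠ b := (G.mem_edgeSet.mp heG).ne
  have hwe : w₁ s(a, b) = w₂ s(a, b) := by
    refine le_antisymm (hle _ heG) ?_
    by_contra hlt
    exact heE ((hEp _).mpr ⟨heG, not_le.mp hlt⟩)
  set H₁ := fromEdgeSet (T₁ : Set (Sym2 V)) with hH₁
  set H₂ := fromEdgeSet (T₂ : Set (Sym2 V)) with hH₂
  set D₁ := fromEdgeSet ((T₁.erase s(a, b) : Finset (Sym2 V)) : Set (Sym2 V)) with hD₁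
  have hT₁adj : H₁.Adj a b := (fromEdgeSet_adj _).mpr ⟨heT₁, hab⟩
  have hbr : ¬ D₁.Reachable a b := by
    have hb := isAcyclic_iff_forall_adj_isBridge.mp hT₁a hT₁adj
    rw [isBridge_iff] at hb
    rw [hD₁, ← del_eq]
    exact hb
  obtain ⟨p0⟩ := hT₂c.preconnected a b
  set p := p0.bypass with hpdef
  have hp : p.IsPath := Walk.bypass_isPath p0
  obtain ⟨d, hd, hdx, hdy⟩ := p.exists_boundary_dart {v | D₁.Reachable a v}
    (Reachable.refl a) (by simpa using hbr)
  have hdxy : d.edge = s(d.fst, d.snd) := rfl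
  have hxy : d.fst ≠ d.snd := d.adj.ne
  have hfp : d.edge ∈ p.edges := List.mem_map_of_mem (f := Dart.edge) hd
  have hfT₂ : s(d.fst, d.snd) ∈ T₂ := by
    have h1 := p.edges_subset_edgeSet hfp
    rw [edgeSet_fromEdgeSet] at h1
    rw [← hdxy]
    exact_mod_cast h1.1
  have hfe : s(d.fst, d.snd) ≠ s(a, b) := fun hq => heT₂ (hq ▸ hfT₂)
  have hfG : s(d.fst, d.snd) ∈ G.edgeSet := hT₂G hfT₂
  have hfT₁ : s(d.fst, d.snd) ∉ T₁ := by
    intro hf1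
    have hadj : D₁.Adj d.fst d.snd :=
      (fromEdgeSet_adj _).mpr ⟨by exact_mod_cast Finset.mem_erase.mpr ⟨hfe, hf1⟩, hxy⟩
    exact hdy (hdx.trans hadj.reachable)
  obtain ⟨q₁, q₂, hq⟩ := dart_split p d hd
  have hnd : p.edges.Nodup := hp.isTrail.edges_nodup
  rw [hq, List.nodup_append] at hnd
  have hnd₁ : d.edge ∉ q₁.edges := fun hmem => hnd.2.2 _ hmem _ List.mem_cons_self rfl
  have hnd₂ : d.edge ∉ q₂.edges := (List.nodup_cons.mp hnd.2.1).1
  set D₂ := fromEdgeSet ((T₂.erase s(d.fst, d.snd) : Finset (Sym2 V)) : Set (Sym2 V)) with hD₂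
  have hsub : ∀ {u v : V} (q : H₂.Walk u v), d.edge ∉ q.edges →
      ∀ g' ∈ q.edges, g' ∈ D₂.edgeSet := by
    intro u v q hnq g' hg'
    have h1 := q.edges_subset_edgeSet hg'
    rw [hH₂, edgeSet_fromEdgeSet] at h1
    rw [hD₂, edgeSet_fromEdgeSet]
    refine ⟨?_, h1.2⟩
    have hne : g' ≠ s(d.fst, d.snd) := fun hgg => hnq (by rw [hdxy, ← hgg]; exact hg')
    have := h1.1
    exact_mod_cast Finset.mem_erase.mpr ⟨hne, by exact_mod_cast this⟩
  have hrxa : D₂.Reachable d.fst a := ⟨(q₁.transfer D₂ (hsub q₁ hnd₁)).reverse⟩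
  have hryb : D₂.Reachable d.snd b := ⟨q₂.transfer D₂ (hsub q₂ hnd₂)⟩
  have hrby : D₁.Reachable b d.snd := by
    obtain ⟨wy⟩ := hT₁c.preconnected d.snd a
    have hdel : (fromEdgeSet (T₁ : Set (Sym2 V))).deleteEdges {s(a, b)} = D₁ := del_eq T₁ _
    rcases reach_or b wy with hr | hr
    · rw [hdel] at hr
      exact absurd hr.symm hdy
    · rw [hdel] at hr
      exact hr.symm
  have hdx' : D₁.Reachable a d.fst := hdx
  obtain ⟨hc₃, ha₃⟩ := swap_tree hT₁c hT₁a hab hxy heT₁ hdx' hrby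
  obtain ⟨hc₄, ha₄⟩ := swap_tree hT₂c hT₂a hxy hab hfT₂ hrxa hryb
  have hT₃G : ((insert s(d.fst, d.snd) (T₁.erase s(a, b)) : Finset (Sym2 V)) : Set (Sym2 V))
      ⊆ G.edgeSet := by
    intro g' hg'
    simp only [Finset.coe_insert, Set.mem_insert_iff, Finset.mem_coe, Finset.mem_erase] at hg'
    rcases hg' with rfl | ⟨-, hg'⟩
    · exact hfG
    · exact hT₁G hg'
  have hT₄G : ((insert s(a, b) (T₂.erase s(d.fst, d.snd)) : Finset (Sym2 V)) : Set (Sym2 V))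
      ⊆ G.edgeSet := by
    intro g' hg'
    simp only [Finset.coe_insert, Set.mem_insert_iff, Finset.mem_coe, Finset.mem_erase] at hg'
    rcases hg' with rfl | ⟨-, hg'⟩
    · exact heG
    · exact hT₂G hg'
  have h13 := hT₁min _ ⟨hT₃G, hc₃, ha₃⟩
  have h24 := hT₂min _ ⟨hT₄G, hc₄, ha₄⟩
  rw [wsum_swap w₁ heT₁ hfT₁] at h13
  rw [wsum_swap w₂ hfT₂ heT₂] at h24
  have h3 : w₁ s(d.fst, d.snd) ≤ w₂ s(d.fst, d.snd) := hle _ hfG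
  have hEq : w₂ s(d.fst, d.snd) = w₂ s(a, b) := by linarith
  exact hfe (hw₂ hfG heG hEq)
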